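/- For every integer n ≥ 1, define c_0 = 1 and c_j = ∏_{ℓ=1}^j 1/(2ℓ(n+2ℓ)) for j ≥ 1, and let ψ(ρ) = ∑_{j=0}^∞ c_j ρ^{2j+1}. Then the series converges for every ρ ∈ ℝ, and ρ ψ'(ρ) > ψ(ρ) for every ρ > 0; consequently there is no λ > 0 satisfying the Robin boundary relation λ ψ'(λ) = ψ(λ). -/

import Mathlib

open Real Filter

/-- Coefficients of the degree-one radial mode: `c 0 = 1`, `c j = ∏_{ℓ=1}^j 1/(2ℓ(n+2ℓ))`. -/
noncomputable def c (n : ℕ) (j : ℕ) : ℝ :=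
  ∏ ℓ ∈ Finset.Icc 1 j, 1 / (2 * (ℓ : ℝ) * ((n : ℝ) + 2 * (ℓ : ℝ)))

/-- The regular radial solution of the degree-one mode equation:
`ψ(ρ) = ∑_{j=0}^∞ c_j ρ^{2j+1}`. -/
noncomputable def psi (n : ℕ) (ρ : ℝ) : ℝ := ∑' j : ℕ, c n j * ρ ^ (2 * j + 1)

lemma c_pos (n : ℕ) (hn : 1 ≤ n) (j : ℕ) : 0 < c n j := by
  apply Finset.prod_pos
  intro ℓ hℓ
  simp only [Finset.mem_Icc] at hℓ
  have h1 : (1 : ℝ) ≤ ℓ := by exact_mod_cast hℓ.1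
  positivity

lemma c_succ (n : ℕ) (j : ℕ) :
    c n (j + 1) = c n j * (1 / (2 * ((j : ℝ) + 1) * ((n : ℝ) + 2 * ((j : ℝ) + 1)))) := by
  unfold c
  rw [Finset.prod_Icc_succ_top (Nat.le_add_left 1 j)]
  push_cast
  ring

lemma denom_pos (n : ℕ) (hn : 1 ≤ n) (j : ℕ) :
    0 < 2 * ((j : ℝ) + 1) * ((n : ℝ) + 2 * ((j : ℝ) + 1)) := by
  have : (1 : ℝ) ≤ n := by exact_mod_cast hn
  positivity

lemma summable1 (n : ℕ) (hn : 1 ≤ n) (x : ℝ) :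
    Summable fun j : ℕ => c n j * x ^ (2 * j + 1) := by
  apply summable_of_ratio_norm_eventually_le (r := 1/2) (by norm_num)
  filter_upwards [eventually_ge_atTop ⌈x ^ 2⌉₊] with j hj
  have hD := denom_pos n hn j
  have hx2 : x ^ 2 ≤ (j : ℝ) + 1 := by
    calc x ^ 2 ≤ (⌈x ^ 2⌉₊ : ℝ) := Nat.le_ceil _
    _ ≤ (j : ℝ) := by exact_mod_cast hj
    _ ≤ (j : ℝ) + 1 := by linarith
  have hn1 : (1 : ℝ) ≤ n := by exact_mod_cast hn
  have key : c n (j+1) * |x| ^ (2 * (j+1) + 1)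
      = (c n j * |x| ^ (2 * j + 1)) * (x ^ 2 / (2 * ((j : ℝ) + 1) * ((n : ℝ) + 2 * ((j : ℝ) + 1)))) := by
    rw [c_succ]
    have : |x| ^ (2 * (j+1) + 1) = |x| ^ (2 * j + 1) * x ^ 2 := by
      rw [← sq_abs]; ring
    rw [this]; field_simp
  have hfrac : x ^ 2 / (2 * ((j : ℝ) + 1) * ((n : ℝ) + 2 * ((j : ℝ) + 1))) ≤ 1/2 := by
    rw [div_le_iff₀ hD]
    nlinarith [sq_nonneg x]
  have hpos := (c_pos n hn j)
  have habs : ∀ k : ℕ, ‖c n k * x ^ (2 * k + 1)‖ = c n k * |x| ^ (2 * k + 1) := by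
    intro k
    rw [norm_mul, Real.norm_eq_abs, Real.norm_eq_abs, abs_of_pos (c_pos n hn k), abs_pow]
  rw [habs, habs, key]
  have hbase : 0 ≤ c n j * |x| ^ (2 * j + 1) := by positivity
  calc c n j * |x| ^ (2 * j + 1) * (x ^ 2 / (2 * ((j:ℝ) + 1) * ((n:ℝ) + 2 * ((j:ℝ) + 1))))
      ≤ c n j * |x| ^ (2 * j + 1) * (1/2) := by
        apply mul_le_mul_of_nonneg_left hfrac hbase
    _ = 1/2 * (c n j * |x| ^ (2 * j + 1)) := by ring

lemma summable2 (n : ℕ) (hn : 1 ≤ n) (x : ℝ) :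
    Summable fun j : ℕ => (2 * (j : ℝ) + 1) * c n j * x ^ (2 * j) := by
  apply summable_of_ratio_norm_eventually_le (r := 1/2) (by norm_num)
  filter_upwards [eventually_ge_atTop ⌈3 * x ^ 2⌉₊] with j hj
  have hD := denom_pos n hn j
  have hx2 : 3 * x ^ 2 ≤ (j : ℝ) + 1 := by
    calc 3 * x ^ 2 ≤ (⌈3 * x ^ 2⌉₊ : ℝ) := Nat.le_ceil _
    _ ≤ (j : ℝ) := by exact_mod_cast hj
    _ ≤ (j : ℝ) + 1 := by linarith
  have hn1 : (1 : ℝ) ≤ n := by exact_mod_cast hn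
  have habs : ∀ k : ℕ, ‖(2 * (k : ℝ) + 1) * c n k * x ^ (2 * k)‖
      = (2 * (k : ℝ) + 1) * c n k * |x| ^ (2 * k) := by
    intro k
    rw [norm_mul, norm_mul, Real.norm_eq_abs, Real.norm_eq_abs, Real.norm_eq_abs,
      abs_of_pos (c_pos n hn k), abs_pow, abs_of_pos (by positivity : (0:ℝ) < 2 * (k:ℝ) + 1)]
  rw [habs, habs]
  push_cast
  have key : (2 * ((j : ℝ)+1) + 1) * c n (j+1) * |x| ^ (2 * (j+1))
      = ((2 * (j : ℝ) + 1) * c n j * |x| ^ (2 * j)) *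
        ((2 * ((j:ℝ)+1) + 1) / (2 * (j:ℝ) + 1) * (x ^ 2 / (2 * ((j : ℝ) + 1) * ((n : ℝ) + 2 * ((j : ℝ) + 1))))) := by
    rw [c_succ]
    have : |x| ^ (2 * (j+1)) = |x| ^ (2 * j) * x ^ 2 := by
      rw [← sq_abs]; ring
    rw [this]
    have h21 : (2 * (j:ℝ) + 1) ≠ 0 := by positivity
    field_simp
  rw [key]
  have hfrac : (2 * ((j:ℝ)+1) + 1) / (2 * (j:ℝ) + 1) * (x ^ 2 / (2 * ((j : ℝ) + 1) * ((n : ℝ) + 2 * ((j : ℝ) + 1)))) ≤ 1/2 := by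
    have h1 : (2 * ((j:ℝ)+1) + 1) / (2 * (j:ℝ) + 1) ≤ 3 := by
      rw [div_le_iff₀ (by positivity)]
      nlinarith [Nat.cast_nonneg (α := ℝ) j]
    have h2 : x ^ 2 / (2 * ((j : ℝ) + 1) * ((n : ℝ) + 2 * ((j : ℝ) + 1))) ≤ 1/6 := by
      rw [div_le_iff₀ hD]
      nlinarith [sq_nonneg x, Nat.cast_nonneg (α := ℝ) j]
    have h3 : 0 ≤ x ^ 2 / (2 * ((j : ℝ) + 1) * ((n : ℝ) + 2 * ((j : ℝ) + 1))) := by positivity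
    calc (2 * ((j:ℝ)+1) + 1) / (2 * (j:ℝ) + 1) * (x ^ 2 / (2 * ((j : ℝ) + 1) * ((n : ℝ) + 2 * ((j : ℝ) + 1))))
        ≤ 3 * (1/6) := mul_le_mul h1 h2 h3 (by norm_num)
      _ = 1/2 := by norm_num
  have hbase : 0 ≤ (2 * (j : ℝ) + 1) * c n j * |x| ^ (2 * j) := by
    have := c_pos n hn j
    positivity
  calc ((2 * (j : ℝ) + 1) * c n j * |x| ^ (2 * j)) *
        ((2 * ((j:ℝ)+1) + 1) / (2 * (j:ℝ) + 1) * (x ^ 2 / (2 * ((j : ℝ) + 1) * ((n : ℝ) + 2 * ((j : ℝ) + 1)))))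
      ≤ ((2 * (j : ℝ) + 1) * c n j * |x| ^ (2 * j)) * (1/2) :=
        mul_le_mul_of_nonneg_left hfrac hbase
    _ = 1/2 * ((2 * (j : ℝ) + 1) * c n j * |x| ^ (2 * j)) := by ring

lemma deriv_psi (n : ℕ) (hn : 1 ≤ n) (ρ : ℝ) :
    HasDerivAt (psi n) (∑' j : ℕ, (2 * (j : ℝ) + 1) * c n j * ρ ^ (2 * j)) ρ := by
  set R : ℝ := |ρ| + 1 with hR
  have hRpos : (0:ℝ) < R := by positivity
  have hρmem : ρ ∈ Set.Ioo (-R) R := by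
    constructor
    · have := neg_abs_le ρ; simp [hR]; linarith
    · have := le_abs_self ρ; simp [hR]; linarith
  have h0mem : (0:ℝ) ∈ Set.Ioo (-R) R := by
    have := abs_nonneg ρ
    constructor <;> simp [hR] <;> linarith
  have := hasDerivAt_tsum_of_isPreconnected
    (u := fun j : ℕ => (2 * (j : ℝ) + 1) * c n j * R ^ (2 * j))
    (g := fun j y => c n j * y ^ (2 * j + 1))
    (g' := fun j y => (2 * (j : ℝ) + 1) * c n j * y ^ (2 * j))
    (summable2 n hn R) isOpen_Ioo (isPreconnected_Ioo)
    (fun j y _ => by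
      have h := (hasDerivAt_pow (2 * j + 1) y).const_mul (c n j)
      refine h.congr_deriv ?_
      rw [Nat.add_sub_cancel]; push_cast
      ring)
    (fun j y hy => by
      have hyR : |y| ≤ R := by
        rw [abs_le]; exact ⟨hy.1.le, hy.2.le⟩
      have hc := (c_pos n hn j).le
      rw [norm_mul, Real.norm_eq_abs, Real.norm_eq_abs,
        abs_of_nonneg (by positivity : (0:ℝ) ≤ (2 * (j:ℝ) + 1) * c n j), abs_pow]
      have : |y| ^ (2 * j) ≤ R ^ (2 * j) := pow_le_pow_left₀ (abs_nonneg y) hyR _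
      have h2 : (0:ℝ) ≤ (2 * (j:ℝ) + 1) * c n j := by positivity
      calc (2 * (j:ℝ) + 1) * c n j * |y| ^ (2*j) ≤ (2 * (j:ℝ) + 1) * c n j * R ^ (2*j) :=
        mul_le_mul_of_nonneg_left this h2
      _ = _ := rfl)
    h0mem (summable1 n hn 0) hρmem
  exact this

theorem stmt11 (n : ℕ) (hn : 1 ≤ n) :
    (∀ ρ : ℝ, Summable fun j : ℕ => c n j * ρ ^ (2 * j + 1)) ∧
    (∀ ρ : ℝ, 0 < ρ → psi n ρ < ρ * deriv (psi n) ρ) ∧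
    ¬∃ l : ℝ, 0 < l ∧ l * deriv (psi n) l = psi n l := by
  have hmain : ∀ ρ : ℝ, 0 < ρ → psi n ρ < ρ * deriv (psi n) ρ := by
    intro ρ hρ
    have hd := deriv_psi n hn ρ
    rw [hd.deriv]
    have hs1 := summable1 n hn ρ
    have hs2 := summable2 n hn ρ
    have hkey : ρ * (∑' j : ℕ, (2 * (j : ℝ) + 1) * c n j * ρ ^ (2 * j)) - psi n ρ
        = ∑' j : ℕ, 2 * (j : ℝ) * c n j * ρ ^ (2 * j + 1) := by
      rw [psi, ← tsum_mul_left, ← (hs2.mul_left ρ).tsum_sub hs1]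
      congr 1
      funext j
      ring
    have hsub : Summable fun j : ℕ => 2 * (j : ℝ) * c n j * ρ ^ (2 * j + 1) := by
      refine ((hs2.mul_left ρ).sub hs1).congr fun j => ?_
      ring
    have hpos : 0 < ∑' j : ℕ, 2 * (j : ℝ) * c n j * ρ ^ (2 * j + 1) := by
      apply hsub.tsum_pos (fun j => by
        have := (c_pos n hn j).le
        positivity) 1
      have := c_pos n hn 1
      have : (0:ℝ) < c n 1 := this
      norm_num
      positivity
    linarith [hkey ▸ hpos]
  refine ⟨summable1 n hn, hmain, ?_⟩
  rintro ⟨l, hl, heq⟩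
  have := hmain l hl
  linarith
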